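/- For a,b ∈ ℕ₀ with a ≥ b and n ≥ 2, let h_{a,b}(ξ) = cos^{a+b}(ξ)·F(−b, −(a+1), 2(n−1), −tan²(ξ)). Then cos(ξ)·h_{a,b}(ξ) = ((2n−2+b)/(2n+a+b−1))·h_{a,b+1}(ξ) + ((a+1)/(2n+a+b−1))·h_{a−1,b}(ξ) and also cos(ξ)·h_{a,b}(ξ) = ((2n−1+a)/(2n+a+b−1))·h_{a+1,b}(ξ) + (b/(2n+a+b−1))·h_{a,b−1}(ξ). -/

import Mathlib

/-- The Gauss hypergeometric series `F(a,b,c,z) = ∑ (a)ₙ(b)ₙ/(c)ₙ · zⁿ/n!`,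
where `(q)ₙ = q(q+1)⋯(q+n-1)` is the Pochhammer symbol. -/
noncomputable def hypF (a b c z : ℝ) : ℝ :=
  ∑' n : ℕ,
    ((∏ i ∈ Finset.range n, (a + (i : ℝ))) * (∏ i ∈ Finset.range n, (b + (i : ℝ))) /
      (∏ i ∈ Finset.range n, (c + (i : ℝ)))) * z ^ n / (n.factorial : ℝ)


/-- The radial part of the `M`-spherical function of the `Sp(n)×Sp(1)`-type `V_{a,b}` on
`S^{4n-1}`: `h_{a,b}(ξ) = cos^{a+b}(ξ)·F(-b, -(a+1), 2(n-1), -tan²ξ)` (integer indices). -/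
noncomputable def radialSp (n : ℕ) (a b : ℤ) (ξ : ℝ) : ℝ :=
  Real.cos ξ ^ (a + b) *
    hypF (-(b : ℝ)) (-((a : ℝ) + 1)) (2 * ((n : ℝ) - 1)) (-(Real.tan ξ) ^ 2)

lemma hypF_comm (a b c z : ℝ) : hypF a b c z = hypF b a c z := by
  unfold hypF
  exact tsum_congr fun k => by ring

noncomputable def hypTerm (a b c z : ℝ) (k : ℕ) : ℝ :=
  ((∏ i ∈ Finset.range k, (a + (i : ℝ))) * (∏ i ∈ Finset.range k, (b + (i : ℝ))) /
      (∏ i ∈ Finset.range k, (c + (i : ℝ)))) * z ^ k / (k.factorial : ℝ)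

lemma hypF_eq_tsum (a b c z : ℝ) : hypF a b c z = ∑' k, hypTerm a b c z k := rfl

lemma hypF_eq_sum (m N : ℕ) (h : m < N) (A c z : ℝ) :
    hypF (-(m : ℝ)) A c z = ∑ k ∈ Finset.range N, hypTerm (-(m : ℝ)) A c z k := by
  rw [hypF_eq_tsum]
  apply tsum_eq_sum
  intro k hk
  have hm : m ∈ Finset.range k := by
    simp only [Finset.mem_range] at hk ⊢; omega
  have h0 : (∏ i ∈ Finset.range k, (-(m : ℝ) + i)) = 0 :=
    Finset.prod_eq_zero hm (by simp)
  simp [hypTerm, h0]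

lemma shift_prod (x : ℝ) (k : ℕ) :
    (∏ i ∈ Finset.range (k + 1), (x + i)) = (∏ i ∈ Finset.range k, (x + 1 + i)) * x := by
  rw [Finset.prod_range_succ']
  congr 1
  · exact Finset.prod_congr rfl fun i _ => by push_cast; ring
  · simp

lemma contig (m : ℕ) (A c z : ℝ) (hc : 0 < c) :
    (c - A + m) * hypF (-(m : ℝ)) A c z
      = (c + m) * hypF (-(m : ℝ) - 1) A c z
        + A * (z - 1) * hypF (-(m : ℝ)) (A + 1) c z := by
  have hB : -(m : ℝ) - 1 = -((m + 1 : ℕ) : ℝ) := by push_cast; ring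
  rw [hypF_eq_sum m (m + 2) (by omega), hB, hypF_eq_sum (m + 1) (m + 2) (by omega),
    hypF_eq_sum m (m + 2) (by omega)]
  have hPc : ∀ k : ℕ, (0 : ℝ) < ∏ i ∈ Finset.range k, (c + i) :=
    fun k => Finset.prod_pos fun i _ => by positivity
  -- key rearranged sum identity
  have key : ∑ k ∈ Finset.range (m + 2),
      ((c - A + m) * hypTerm (-(m : ℝ)) A c z k
        - (c + m) * hypTerm (-((m + 1 : ℕ) : ℝ)) A c z k
        + A * hypTerm (-(m : ℝ)) (A + 1) c z k)
      = ∑ k ∈ Finset.range (m + 1), A * z * hypTerm (-(m : ℝ)) (A + 1) c z k := by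
    rw [Finset.sum_range_succ']
    have h0 : (c - A + m) * hypTerm (-(m : ℝ)) A c z 0
        - (c + m) * hypTerm (-((m + 1 : ℕ) : ℝ)) A c z 0
        + A * hypTerm (-(m : ℝ)) (A + 1) c z 0 = 0 := by
      simp [hypTerm]
    rw [h0, add_zero]
    apply Finset.sum_congr rfl
    intro k _
    have hBm : -((m + 1 : ℕ) : ℝ) = (-(m:ℝ)) - 1 := by push_cast; ring
    unfold hypTerm
    rw [hBm, shift_prod (-(m:ℝ) - 1) k, shift_prod A k]
    have e1 : ∀ i : ℕ, (-(m:ℝ)) - 1 + 1 + (i:ℝ) = -(m:ℝ) + i := fun i => by ring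
    simp only [e1, Finset.prod_range_succ]
    have hr := (hPc k).ne'
    have hck : c + k ≠ 0 := by positivity
    have hfk : ((k.factorial : ℝ)) ≠ 0 := Nat.cast_ne_zero.mpr k.factorial_ne_zero
    rw [Nat.factorial_succ]
    push_cast
    field_simp
    ring
  -- the top term of the last sum vanishes
  have htop : hypTerm (-(m : ℝ)) (A + 1) c z (m + 1) = 0 := by
    have h0 : (∏ i ∈ Finset.range (m + 1), (-(m : ℝ) + i)) = 0 :=
      Finset.prod_eq_zero (Finset.self_mem_range_succ m) (by simp)
    simp [hypTerm, h0]
  have hS3 : ∑ k ∈ Finset.range (m + 2), A * z * hypTerm (-(m : ℝ)) (A + 1) c z k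
      = ∑ k ∈ Finset.range (m + 1), A * z * hypTerm (-(m : ℝ)) (A + 1) c z k := by
    rw [Finset.sum_range_succ, htop]; ring
  rw [Finset.sum_add_distrib, Finset.sum_sub_distrib, ← Finset.mul_sum, ← Finset.mul_sum,
    ← Finset.mul_sum, ← Finset.mul_sum] at key
  rw [← Finset.mul_sum, ← Finset.mul_sum] at hS3
  linear_combination key - hS3

/-- Contiguous recursions for the radial spherical functions of `Sp(n,1)`, `n ≥ 2`,
`a ≥ b ≥ 0`:
`cos ξ·h_{a,b} = ((2n-2+b)/(2n+a+b-1))·h_{a,b+1} + ((a+1)/(2n+a+b-1))·h_{a-1,b}` and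
`cos ξ·h_{a,b} = ((2n-1+a)/(2n+a+b-1))·h_{a+1,b} + (b/(2n+a+b-1))·h_{a,b-1}`. -/
theorem radialSp_recursions (n : ℕ) (hn : 2 ≤ n) (a b : ℕ) (hab : b ≤ a) (ξ : ℝ)
    (hξ : Real.cos ξ ≠ 0) :
    (Real.cos ξ * radialSp n a b ξ
        = ((2 * (n : ℝ) - 2 + b) / (2 * (n : ℝ) + a + b - 1)) * radialSp n a ((b : ℤ) + 1) ξ
          + (((a : ℝ) + 1) / (2 * (n : ℝ) + a + b - 1)) * radialSp n ((a : ℤ) - 1) b ξ) ∧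
      (Real.cos ξ * radialSp n a b ξ
        = ((2 * (n : ℝ) - 1 + a) / (2 * (n : ℝ) + a + b - 1)) * radialSp n ((a : ℤ) + 1) b ξ
          + ((b : ℝ) / (2 * (n : ℝ) + a + b - 1)) * radialSp n a ((b : ℤ) - 1) ξ) := by
  set C := Real.cos ξ with hC
  set z := -(Real.tan ξ) ^ 2 with hzdef
  set c := 2 * ((n : ℝ) - 1) with hcdef
  have hn' : (2 : ℝ) ≤ (n : ℝ) := by exact_mod_cast hn
  have hc : 0 < c := by rw [hcdef]; linarith
  have hD : 2 * (n : ℝ) + a + b - 1 ≠ 0 := by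
    have ha : (0:ℝ) ≤ a := Nat.cast_nonneg a
    have hb : (0:ℝ) ≤ b := Nat.cast_nonneg b
    nlinarith
  have hrad : ∀ p q : ℤ, radialSp n p q ξ
      = C ^ (p + q) * hypF (-(q : ℝ)) (-((p : ℝ) + 1)) c z := fun p q => rfl
  have hz1 : (C ^ 2)⁻¹ = 1 - z := by
    rw [hzdef, hC, Real.tan_eq_sin_div_cos]
    have h1 := Real.sin_sq_add_cos_sq ξ
    have hcos : Real.cos ξ ≠ 0 := hξ
    field_simp
    linarith
  set w := C ^ ((a : ℤ) + (b : ℤ) + 1) with hw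
  have p0 : C * C ^ ((a : ℤ) + (b : ℤ)) = w := by
    rw [hw, zpow_add_one₀ hξ]; ring
  have p1 : C ^ ((a : ℤ) + ((b : ℤ) + 1)) = w := by
    rw [hw]; ring_nf
  have p2 : C ^ (((a : ℤ) - 1) + (b : ℤ)) = w * (1 - z) := by
    rw [← hz1, hw, show ((a : ℤ) - 1) + (b : ℤ) = ((a : ℤ) + (b : ℤ) + 1) + (-2) from by ring,
      zpow_add₀ hξ]
    congr 1
  have p3 : C ^ (((a : ℤ) + 1) + (b : ℤ)) = w := by
    rw [hw]; ring_nf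
  have p4 : C ^ ((a : ℤ) + ((b : ℤ) - 1)) = w * (1 - z) := by
    rw [← p2]; ring_nf
  constructor
  · have h1 := contig b (-((a : ℝ) + 1)) c z hc
    rw [show -(b:ℝ) - 1 = -((b:ℝ) + 1) from by ring,
      show -((a:ℝ) + 1) + 1 = -(a:ℝ) from by ring] at h1
    simp only [hrad]
    rw [← mul_assoc, p0, p1, p2,
      show -(((b:ℕ):ℤ):ℝ) = -(b:ℝ) from by push_cast; ring,
      show -((((a:ℕ):ℤ):ℝ) + 1) = -((a:ℝ) + 1) from by push_cast; ring,
      show -((((b:ℕ):ℤ) + 1 : ℤ):ℝ) = -((b:ℝ) + 1) from by push_cast; ring,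
      show -(((((a:ℕ):ℤ) - 1 : ℤ):ℝ) + 1) = -(a:ℝ) from by push_cast; ring]
    rw [hcdef] at h1
    rw [div_mul_eq_mul_div, div_mul_eq_mul_div, ← add_div, eq_div_iff hD]
    linear_combination w * h1
  · have h2 := contig (a + 1) (-(b : ℝ)) c z hc
    rw [hypF_comm, hypF_comm (-((a+1:ℕ):ℝ) - 1), hypF_comm (-((a+1:ℕ):ℝ)) (-(b:ℝ) + 1)] at h2
    push_cast at h2
    simp only [hrad]
    rw [← mul_assoc, p0, p3, p4,
      show -(((b:ℕ):ℤ):ℝ) = -(b:ℝ) from by push_cast; ring,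
      show -((((a:ℕ):ℤ):ℝ) + 1) = -((a:ℝ) + 1) from by push_cast; ring,
      show -(((((a:ℕ):ℤ) + 1 : ℤ):ℝ) + 1) = -((a:ℝ) + 1) - 1 from by push_cast; ring,
      show -((((b:ℕ):ℤ) - 1 : ℤ):ℝ) = -(b:ℝ) + 1 from by push_cast; ring]
    rw [hcdef] at h2
    rw [div_mul_eq_mul_div, div_mul_eq_mul_div, ← add_div, eq_div_iff hD]
    linear_combination w * h2
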